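/- arXiv:1310.4312 — 3 statements merged into one kernel-verified Lean document; each statement's English description precedes it below -/
import Mathlib

section
/- For every finite sequence f^1,...,f^n in H^p with 0 < p ≤ 2, one has ‖(∑_{i=1}^n |f^i|^p)^{1/p}‖_{H^p} ≤ (∑_{i=1}^n ‖f^i‖_{H^p}^p)^{1/p}; i.e. H^p is p-convex with constant 1. -/
open MeasureTheory
open scoped ENNReal NNReal

/-- Dyadic intervals of `[0,1)`: level `n` and position `k < 2^n`. -/
abbrev DyadicI : Type := (n : ℕ) × Fin (2 ^ n)

/-- The subinterval of `[0,1)` corresponding to a dyadic index. -/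
noncomputable def dySet (I : DyadicI) : Set ℝ :=
  Set.Ico ((I.2 : ℝ) / 2 ^ I.1) (((I.2 : ℝ) + 1) / 2 ^ I.1)

/-- Length `|I| = 2^{-n}` of a dyadic interval. -/
noncomputable def dyLen (I : DyadicI) : ℝ := ((2 : ℝ) ^ I.1)⁻¹

/-- The `L^∞`-normalized Haar function of `I`. -/
noncomputable def haar (I : DyadicI) (t : ℝ) : ℝ :=
  (Set.Ico ((I.2 : ℝ) / 2 ^ I.1) (((I.2 : ℝ) + 1 / 2) / 2 ^ I.1)).indicator 1 t
    - (Set.Ico (((I.2 : ℝ) + 1 / 2) / 2 ^ I.1) (((I.2 : ℝ) + 1) / 2 ^ I.1)).indicator 1 t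

/-- Square function `S(f)(t) = (∑_I x_I² 1_I(t))^{1/2}`. -/
noncomputable def sqF (x : DyadicI → ℝ) (t : ℝ) : ℝ :=
  Real.sqrt (∑' I : DyadicI, (x I) ^ 2 * (dySet I).indicator 1 t)

/-- The dyadic Hardy space (quasi-)norm `‖f‖_{H^p} = ‖S(f)‖_{L^p[0,1]}`. -/
noncomputable def hpNorm (p : ℝ) (x : DyadicI → ℝ) : ℝ :=
  (∫ t in Set.Ioo (0 : ℝ) 1, sqF x t ^ p) ^ (1 / p)

/-- `‖f‖_{L²}² = ∑_I x_I² |I|`. -/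
noncomputable def l2Norm (x : DyadicI → ℝ) : ℝ :=
  Real.sqrt (∑' I : DyadicI, (x I) ^ 2 * dyLen I)

/-- Sup norm of the square function. -/
noncomputable def supSqF (x : DyadicI → ℝ) : ℝ := ⨆ t : ℝ, sqF x t

/-- Restriction of the coefficient sequence to a block `G ⊆ D`. -/
noncomputable def restr (G : Set DyadicI) (x : DyadicI → ℝ) : DyadicI → ℝ :=
  G.indicator x


open scoped ENNReal in
instance : MeasurableSingletonClass DyadicI := by
  constructor
  intro a
  have : @MeasurableSet _ (⨅ m : ℕ, MeasurableSpace.map (Sigma.mk m)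
      (inferInstance : MeasurableSpace (Fin (2^m)))) {a} := by
    rw [MeasurableSpace.measurableSet_iInf]
    intro m
    exact (MeasurableSet.of_discrete : MeasurableSet (Sigma.mk m ⁻¹' {a}))
  exact this

/-- Minkowski inequality for finite sums of `ℝ≥0∞`-valued sequences in `ℓ^q`, `q ≥ 1`. -/
lemma tsum_Lp_sum_le {ι : Type*} (s : Finset ι) (A : ι → DyadicI → ℝ≥0∞) {q : ℝ}
    (hq : 1 ≤ q) :
    (∑' I : DyadicI, (∑ i ∈ s, A i I) ^ q) ^ (1/q) ≤
      ∑ i ∈ s, (∑' I : DyadicI, (A i I) ^ q) ^ (1/q) := by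
  classical
  have hq0 : 0 < q := lt_of_lt_of_le zero_lt_one hq
  induction s using Finset.induction with
  | empty =>
      simp [ENNReal.zero_rpow_of_pos, hq0]
  | insert _ _ hnot ih =>
      rename_i a s
      simp only [Finset.sum_insert hnot]
      calc (∑' I : DyadicI, (A a I + ∑ i ∈ s, A i I) ^ q) ^ (1/q)
          = (∫⁻ I, ((A a) + (fun J => ∑ i ∈ s, A i J)) I ^ q ∂Measure.count) ^ (1/q) := by
            rw [MeasureTheory.lintegral_count]; rfl
        _ ≤ (∫⁻ I, A a I ^ q ∂Measure.count) ^ (1/q)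
              + (∫⁻ I, (∑ i ∈ s, A i I) ^ q ∂Measure.count) ^ (1/q) :=
            ENNReal.lintegral_Lp_add_le (measurable_of_countable _).aemeasurable
              (measurable_of_countable _).aemeasurable hq
        _ ≤ (∑' I : DyadicI, (A a I) ^ q) ^ (1/q)
              + ∑ i ∈ s, (∑' I : DyadicI, (A i I) ^ q) ^ (1/q) := by
            rw [MeasureTheory.lintegral_count, MeasureTheory.lintegral_count]
            exact add_le_add_right ih _

/-- Representation of `sqF x t ^ p` through an `ℝ≥0∞` sum. -/
lemma sqF_rpow (x : DyadicI → ℝ) (t : ℝ) {p : ℝ} (hp : 0 < p) :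
    sqF x t ^ p =
      ((∑' I : DyadicI, ENNReal.ofReal ((x I) ^ 2 * (dySet I).indicator 1 t)) ^ (p/2)).toReal := by
  have hterm : ∀ I : DyadicI, 0 ≤ (x I) ^ 2 * (dySet I).indicator 1 t := fun I =>
    mul_nonneg (sq_nonneg _) (Set.indicator_nonneg (fun _ _ => zero_le_one) t)
  have h1 : (∑' I : DyadicI, ENNReal.ofReal ((x I) ^ 2 * (dySet I).indicator 1 t)).toReal
      = ∑' I : DyadicI, (x I) ^ 2 * (dySet I).indicator 1 t := by
    rw [ENNReal.tsum_toReal_eq fun I => ENNReal.ofReal_ne_top]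
    exact tsum_congr fun I => ENNReal.toReal_ofReal (hterm I)
  have h2 : 0 ≤ ∑' I : DyadicI, (x I) ^ 2 * (dySet I).indicator 1 t :=
    tsum_nonneg hterm
  rw [sqF, Real.sqrt_eq_rpow, ← Real.rpow_mul h2, ← h1, ENNReal.toReal_rpow, one_div_mul_eq_div]

/-- Pointwise inequality for the square functions. -/
lemma key_pointwise (p : ℝ) (hp0 : 0 < p) (hp2 : p ≤ 2) (n : ℕ) (f : Fin n → DyadicI → ℝ)
    (t : ℝ) :
    sqF (fun I => (∑ i, |f i I| ^ p) ^ (1 / p)) t ^ p ≤ ∑ i, sqF (f i) t ^ p := by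
  classical
  set A : Fin n → DyadicI → ℝ≥0∞ := fun i I =>
    ENNReal.ofReal (|f i I| ^ p * (dySet I).indicator 1 t) with hA
  set q : ℝ := 2 / p with hqdef
  have hq1 : 1 ≤ q := (one_le_div hp0).2 hp2
  have hq0 : 0 < q := lt_of_lt_of_le zero_lt_one hq1
  have hpq : p / 2 = 1 / q := by rw [hqdef, one_div_div]
  -- the two term identities
  have Eg : ∀ I : DyadicI,
      ENNReal.ofReal (((∑ i, |f i I| ^ p) ^ (1 / p)) ^ 2 * (dySet I).indicator 1 t)
        = (∑ i, A i I) ^ q := by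
    intro I
    have hS : 0 ≤ ∑ i, |f i I| ^ p :=
      Finset.sum_nonneg fun i _ => Real.rpow_nonneg (abs_nonneg _) _
    by_cases ht : t ∈ dySet I
    · rw [Set.indicator_of_mem ht]
      simp only [Pi.one_apply, mul_one]
      have e1 : ((∑ i, |f i I| ^ p) ^ (1 / p)) ^ (2:ℕ)
          = (∑ i, |f i I| ^ p) ^ q := by
        rw [← Real.rpow_natCast ((∑ i, |f i I| ^ p) ^ (1/p)) 2, ← Real.rpow_mul hS]
        congr 1
        rw [hqdef]
        field_simp
        norm_num
      rw [e1, ← ENNReal.ofReal_rpow_of_nonneg hS hq0.le]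
      congr 1
      rw [ENNReal.ofReal_sum_of_nonneg fun i _ => Real.rpow_nonneg (abs_nonneg _) _]
      exact Finset.sum_congr rfl fun i _ => by
        rw [hA]; simp [Set.indicator_of_mem ht]
    · rw [Set.indicator_of_notMem ht]
      have : ∀ i, A i I = 0 := fun i => by
        rw [hA]; simp [Set.indicator_of_notMem ht]
      simp [this, ENNReal.zero_rpow_of_pos hq0]
  have Ei : ∀ (i : Fin n) (I : DyadicI),
      ENNReal.ofReal ((f i I) ^ 2 * (dySet I).indicator 1 t) = (A i I) ^ q := by
    intro i I
    by_cases ht : t ∈ dySet I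
    · rw [Set.indicator_of_mem ht]
      simp only [Pi.one_apply, mul_one]
      have e1 : (f i I) ^ (2:ℕ) = (|f i I| ^ p) ^ q := by
        rw [← sq_abs, ← Real.rpow_natCast |f i I| 2, ← Real.rpow_mul (abs_nonneg _)]
        congr 1
        rw [hqdef]
        field_simp
        norm_num
      rw [e1, ← ENNReal.ofReal_rpow_of_nonneg (Real.rpow_nonneg (abs_nonneg _) _) hq0.le, hA]
      simp [Set.indicator_of_mem ht]
    · rw [Set.indicator_of_notMem ht]
      have : A i I = 0 := by rw [hA]; simp [Set.indicator_of_notMem ht]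
      simp [this, ENNReal.zero_rpow_of_pos hq0]
  -- rewrite both sides via sqF_rpow
  rw [sqF_rpow _ t hp0]
  have hRHS : ∀ i : Fin n, sqF (f i) t ^ p
      = ((∑' I : DyadicI, (A i I) ^ q) ^ (1/q)).toReal := by
    intro i
    rw [sqF_rpow _ t hp0, hpq]
    congr 2
    exact tsum_congr fun I => Ei i I
  simp only [hRHS]
  rw [hpq]
  have hT : (∑' I : DyadicI,
      ENNReal.ofReal (((∑ i, |f i I| ^ p) ^ (1 / p)) ^ 2 * (dySet I).indicator 1 t))
      = ∑' I : DyadicI, (∑ i, A i I) ^ q := tsum_congr Eg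
  rw [hT]
  set T : ℝ≥0∞ := ∑' I : DyadicI, (∑ i, A i I) ^ q with hTdef
  set S : Fin n → ℝ≥0∞ := fun i => ∑' I : DyadicI, (A i I) ^ q with hSdef
  have hM : T ^ (1/q) ≤ ∑ i, (S i) ^ (1/q) := tsum_Lp_sum_le Finset.univ A hq1
  by_cases hfin : ∀ i, S i ≠ ∞
  · have hne : (∑ i, (S i) ^ (1/q)) ≠ ∞ := by
      refine (ENNReal.sum_lt_top.2 fun i _ => ?_).ne
      exact (ENNReal.rpow_ne_top_of_nonneg (by positivity) (hfin i)).lt_top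
    calc (T ^ (1/q)).toReal ≤ ((∑ i, (S i) ^ (1/q))).toReal := ENNReal.toReal_mono hne hM
      _ = ∑ i, ((S i) ^ (1/q)).toReal := ENNReal.toReal_sum fun i _ =>
          ENNReal.rpow_ne_top_of_nonneg (by positivity) (hfin i)
  · push_neg at hfin
    obtain ⟨i₀, hi₀⟩ := hfin
    have hTi : S i₀ ≤ T := by
      refine ENNReal.tsum_le_tsum fun I => ?_
      exact ENNReal.rpow_le_rpow (Finset.single_le_sum (f := fun i => A i I) (fun i _ => zero_le)
        (Finset.mem_univ i₀)) hq0.le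
    have hTtop : T = ∞ := top_le_iff.mp (hi₀ ▸ hTi)
    rw [hTtop, ENNReal.top_rpow_of_pos (by positivity)]
    simp only [ENNReal.toReal_top]
    exact Finset.sum_nonneg fun i _ => ENNReal.toReal_nonneg

/-- `H^p`, `0 < p ≤ 2`, is `p`-convex with constant 1:
`‖(∑ |f^i|^p)^{1/p}‖_{H^p} ≤ (∑ ‖f^i‖_{H^p}^p)^{1/p}`. -/
theorem hp_p_convex (p : ℝ) (hp0 : 0 < p) (hp2 : p ≤ 2) (n : ℕ) (f : Fin n → DyadicI → ℝ)
    (hf : ∀ i, Integrable (fun t => sqF (f i) t ^ p) (volume.restrict (Set.Ioo (0 : ℝ) 1))) :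
    hpNorm p (fun I => (∑ i, |f i I| ^ p) ^ (1 / p)) ≤
      (∑ i, hpNorm p (f i) ^ p) ^ (1 / p) := by
  classical
  have hnn : ∀ (x : DyadicI → ℝ) (t : ℝ), 0 ≤ sqF x t ^ p := fun x t =>
    Real.rpow_nonneg (Real.sqrt_nonneg _) _
  have hInt : Integrable (fun t => ∑ i, sqF (f i) t ^ p)
      (volume.restrict (Set.Ioo (0:ℝ) 1)) := by
    apply integrable_finset_sum
    intro i _
    exact hf i
  have h1 : (∫ t in Set.Ioo (0:ℝ) 1, sqF (fun I => (∑ i, |f i I| ^ p) ^ (1 / p)) t ^ p)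
      ≤ ∫ t in Set.Ioo (0:ℝ) 1, ∑ i, sqF (f i) t ^ p := by
    apply integral_mono_of_nonneg
    · exact Filter.Eventually.of_forall fun t => hnn _ t
    · exact hInt
    · exact Filter.Eventually.of_forall fun t => key_pointwise p hp0 hp2 n f t
  have h2 : (∫ t in Set.Ioo (0:ℝ) 1, ∑ i, sqF (f i) t ^ p)
      = ∑ i, ∫ t in Set.Ioo (0:ℝ) 1, sqF (f i) t ^ p :=
    integral_finset_sum _ fun i _ => hf i
  have h3 : ∀ i, hpNorm p (f i) ^ p = ∫ t in Set.Ioo (0:ℝ) 1, sqF (f i) t ^ p := by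
    intro i
    have hX : 0 ≤ ∫ t in Set.Ioo (0:ℝ) 1, sqF (f i) t ^ p :=
      integral_nonneg fun t => hnn _ t
    rw [hpNorm, ← Real.rpow_mul hX, one_div, inv_mul_cancel₀ hp0.ne', Real.rpow_one]
  rw [hpNorm]
  apply Real.rpow_le_rpow (integral_nonneg fun t => hnn _ t) _ (by positivity)
  calc (∫ t in Set.Ioo (0:ℝ) 1, sqF (fun I => (∑ i, |f i I| ^ p) ^ (1 / p)) t ^ p)
      ≤ ∑ i, ∫ t in Set.Ioo (0:ℝ) 1, sqF (f i) t ^ p := h2 ▸ h1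
    _ = ∑ i, hpNorm p (f i) ^ p := Finset.sum_congr rfl fun i _ => (h3 i).symm
end

section
/- Let 1 < p ≤ q < ∞, θ = (q/(q−1))·((p−1)/p), and let ω = (ω_I)_{I∈D} be nonnegative with ∑_I ω_I ≤ 1. Define y_I = (ω_I/|I|)^{1/q}. Then ‖y‖_{f_q^q} ≤ 1, and for every z = (z_I) ∈ f_q^q with ‖z‖_{f_q^q} ≤ 1 one has (∑_I |y_I|^{−qθ} |z_I|^{qθ} ω_I)^{1/q} ≤ 1 (interpreting terms with ω_I = 0 as 0). -/
open MeasureTheory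

/-- `q`-variation `S_q(u)(t) = (∑_I |x_I|^q 1_I(t))^{1/q}`. -/
noncomputable def qvar (q : ℝ) (x : DyadicI → ℝ) (t : ℝ) : ℝ :=
  (∑' I : DyadicI, |x I| ^ q * (dySet I).indicator 1 t) ^ (1 / q)

/-- The Triebel–Lizorkin (quasi-)norm `‖u‖_{f_p^q} = ‖S_q(u)‖_{L^p[0,1]}`. -/
noncomputable def fpqNorm (p q : ℝ) (x : DyadicI → ℝ) : ℝ :=
  (∫ t in Set.Ioo (0 : ℝ) 1, qvar q x t ^ p) ^ (1 / p)

/-- Sup norm of the `q`-variation. -/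
noncomputable def supQvar (q : ℝ) (x : DyadicI → ℝ) : ℝ := ⨆ t : ℝ, qvar q x t

/-- `‖u‖_{f_q^q} = (∑_I |x_I|^q |I|)^{1/q}`. -/
noncomputable def fqqNorm (q : ℝ) (x : DyadicI → ℝ) : ℝ :=
  (∑' I : DyadicI, |x I| ^ q * dyLen I) ^ (1 / q)

/-- For a nonnegative weight `ω` with `∑ ω_I ≤ 1` and
`y_I = (ω_I/|I|)^{1/q}`, one has `‖y‖_{f_q^q} ≤ 1`, and for every `z` with `‖z‖_{f_q^q} ≤ 1`,
`(∑ |y_I|^{-qθ}|z_I|^{qθ} ω_I)^{1/q} ≤ 1`, where `θ = (q/(q-1))((p-1)/p)`,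
`1 < p ≤ q < ∞`. -/
theorem hoelder_weight_estimate (p q θ : ℝ) (hp : 1 < p) (hpq : p ≤ q)
    (hθ : θ = q / (q - 1) * ((p - 1) / p))
    (ω : DyadicI → ℝ) (hω0 : ∀ I, 0 ≤ ω I) (hωs : Summable ω)
    (hω1 : ∑' I : DyadicI, ω I ≤ 1)
    (y : DyadicI → ℝ) (hy : ∀ I, y I = (ω I / dyLen I) ^ (1 / q)) :
    fqqNorm q y ≤ 1 ∧
      ∀ z : DyadicI → ℝ, Summable (fun I => |z I| ^ q * dyLen I) → fqqNorm q z ≤ 1 →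
        (∑' I : DyadicI, |y I| ^ (-(q * θ)) * |z I| ^ (q * θ) * ω I) ^ (1 / q) ≤ 1 := by
  have hq1 : 1 < q := lt_of_lt_of_le hp hpq
  have hq0 : (0:ℝ) < q := by linarith
  have hqne : q ≠ 0 := ne_of_gt hq0
  have hθ0 : 0 ≤ θ := by
    rw [hθ]; apply mul_nonneg <;> apply div_nonneg <;> linarith
  have hθ1 : θ ≤ 1 := by
    rw [hθ, div_mul_div_comm, div_le_one (by nlinarith)]
    nlinarith
  have hL : ∀ I : DyadicI, 0 < dyLen I := fun I => by
    unfold dyLen; positivity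
  have hyterm : ∀ I, |y I| ^ q * dyLen I = ω I := by
    intro I
    have h0 : 0 ≤ ω I / dyLen I := div_nonneg (hω0 I) (hL I).le
    rw [hy I, abs_of_nonneg (Real.rpow_nonneg h0 _), ← Real.rpow_mul h0,
      one_div, inv_mul_cancel₀ hqne, Real.rpow_one, div_mul_cancel₀ _ (hL I).ne']
  have part1 : fqqNorm q y ≤ 1 := by
    unfold fqqNorm
    rw [tsum_congr hyterm]
    exact Real.rpow_le_one (tsum_nonneg fun I => hω0 I) hω1 (by positivity)
  refine ⟨part1, fun z hzs hz1 => ?_⟩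
  set B := ∑' I : DyadicI, |z I| ^ q * dyLen I with hBdef
  have hterm0 : ∀ I, 0 ≤ |z I| ^ q * dyLen I := fun I =>
    mul_nonneg (Real.rpow_nonneg (abs_nonneg _) _) (hL I).le
  have hB0 : 0 ≤ B := tsum_nonneg hterm0
  have hB1 : B ≤ 1 := by
    have h1 : fqqNorm q z ^ q ≤ 1 :=
      Real.rpow_le_one (Real.rpow_nonneg hB0 _) hz1 hq0.le
    calc B = (B ^ (1/q)) ^ q := by
            rw [← Real.rpow_mul hB0, one_div, inv_mul_cancel₀ hqne, Real.rpow_one]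
      _ ≤ 1 := h1
  have key : ∀ I, |y I| ^ (-(q*θ)) * |z I| ^ (q*θ) * ω I
      ≤ (1-θ) * ω I + θ * (|z I| ^ q * dyLen I) := by
    intro I
    rcases eq_or_lt_of_le (hω0 I) with h0 | h0
    · rw [← h0, mul_zero, mul_zero, zero_add]
      exact mul_nonneg hθ0 (hterm0 I)
    · have hLpos := hL I
      have hdiv : 0 ≤ ω I / dyLen I := div_nonneg h0.le hLpos.le
      have heq : |y I| ^ (-(q*θ)) * |z I| ^ (q*θ) * ω I
          = ω I ^ (1-θ) * (|z I| ^ q * dyLen I) ^ θ := by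
        rw [hy I, abs_of_nonneg (Real.rpow_nonneg hdiv _), ← Real.rpow_mul hdiv,
          (show 1/q * -(q*θ) = -θ by field_simp),
          Real.div_rpow h0.le hLpos.le, Real.rpow_neg hLpos.le, div_eq_mul_inv, inv_inv,
          Real.mul_rpow (Real.rpow_nonneg (abs_nonneg _) _) hLpos.le,
          ← Real.rpow_mul (abs_nonneg _),
          (show (1:ℝ)-θ = -θ + 1 by ring), Real.rpow_add h0, Real.rpow_one]
        ring
      rw [heq]
      exact Real.geom_mean_le_arith_mean2_weighted (by linarith) hθ0 h0.le (hterm0 I)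
        (by ring)
  have hmaj : Summable (fun I : DyadicI => (1-θ) * ω I + θ * (|z I| ^ q * dyLen I)) :=
    (hωs.mul_left _).add (hzs.mul_left _)
  have htnn : ∀ I, 0 ≤ |y I| ^ (-(q*θ)) * |z I| ^ (q*θ) * ω I := fun I =>
    mul_nonneg (mul_nonneg (Real.rpow_nonneg (abs_nonneg _) _)
      (Real.rpow_nonneg (abs_nonneg _) _)) (hω0 I)
  have hsum : Summable (fun I : DyadicI => |y I| ^ (-(q*θ)) * |z I| ^ (q*θ) * ω I) :=
    Summable.of_nonneg_of_le htnn key hmaj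
  have hle : (∑' I : DyadicI, |y I| ^ (-(q*θ)) * |z I| ^ (q*θ) * ω I)
      ≤ (1-θ) * (∑' I : DyadicI, ω I) + θ * B := by
    calc (∑' I : DyadicI, |y I| ^ (-(q*θ)) * |z I| ^ (q*θ) * ω I)
        ≤ ∑' I : DyadicI, ((1-θ) * ω I + θ * (|z I| ^ q * dyLen I)) :=
          Summable.tsum_le_tsum key hsum hmaj
      _ = (1-θ) * (∑' I : DyadicI, ω I) + θ * B := by
          rw [Summable.tsum_add (hωs.mul_left _) (hzs.mul_left _), tsum_mul_left, tsum_mul_left]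
  have hle1 : (∑' I : DyadicI, |y I| ^ (-(q*θ)) * |z I| ^ (q*θ) * ω I) ≤ 1 := by
    nlinarith [hle, hω1, hB1]
  exact Real.rpow_le_one (tsum_nonneg htnn) hle1 (by positivity)
end

section
/- Let E be a nonempty collection of dyadic intervals with Carleson constant ⟦E⟧ = sup_{I∈E} (1/|I|) ∑_{J∈E, J⊆I} |J| < ∞. For I ∈ E and ℓ ≥ 0 let G_ℓ(I,E) be the ℓ-th generation of E∩{J⊆I} (G_0 = maximal intervals, G_{n} = maximal intervals of the remainder). Then |G_ℓ^*(I,E)| ≤ 4·2^{−2ℓ/(4⟦E⟧+1)}|I|, where G_ℓ^*(I,E) is the union of the intervals in G_ℓ(I,E). -/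
open MeasureTheory

/-- Maximal intervals of a collection of dyadic intervals. -/
def maximalIn (L : Set DyadicI) : Set DyadicI :=
  {I | I ∈ L ∧ ∀ J ∈ L, dySet I ⊆ dySet J → I = J}

/-- Consecutive generations of a collection of dyadic intervals:
`gen 0 L` are the maximal intervals of `L`, and the `(n+1)`-st generation is obtained by
removing the maximal intervals and taking generations of the remainder. -/
def gen : ℕ → Set DyadicI → Set DyadicI
  | 0, L => maximalIn L
  | n + 1, L => gen n (L \ maximalIn L)


section GenerationDecayAux
open ENNReal

lemma dy_lt (I : DyadicI) : ((I.2 : ℝ) / 2 ^ I.1) < ((I.2 : ℝ) + 1) / 2 ^ I.1 := by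
  apply div_lt_div_of_pos_right ?_ (by positivity)
  linarith

lemma dySet_nonempty (I : DyadicI) : (dySet I).Nonempty :=
  Set.nonempty_Ico.2 (dy_lt I)

lemma dySet_inj : Function.Injective dySet := by
  rintro ⟨n, k⟩ ⟨m, k'⟩ h
  rw [dySet, dySet, Set.Ico_eq_Ico_iff (Or.inl (dy_lt ⟨n, k⟩))] at h
  obtain ⟨h1, h2⟩ := h
  simp only at h1 h2
  have hp : (0:ℝ) < 2 ^ n := by positivity
  have hq : (0:ℝ) < 2 ^ m := by positivity
  have hnm : n = m := by
    have : (2:ℝ)^n = 2^m := by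
      field_simp at h1 h2
      nlinarith [h1, h2]
    exact Nat.pow_right_injective (le_refl 2) (by exact_mod_cast this)
  subst hnm
  have : (k:ℝ) = k' := by
    field_simp at h1
    exact_mod_cast h1
  simp only [Sigma.mk.inj_iff, heq_eq_eq, true_and]
  exact Fin.ext (by exact_mod_cast this)

lemma volume_dySet (I : DyadicI) : volume (dySet I) = ENNReal.ofReal (dyLen I) := by
  rw [dySet, Real.volume_Ico, dyLen]
  congr 1
  field_simp
  ring


-- key subset construction: if levels m ≤ n and the intervals intersect, the finer is inside
lemma subset_of_mem {n m : ℕ} (hmn : m ≤ n) (k k' : ℕ) {t : ℝ}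
    (h1 : (k:ℝ)/2^n ≤ t) (h2 : t < ((k:ℝ)+1)/2^n)
    (h3 : (k':ℝ)/2^m ≤ t) (h4 : t < ((k':ℝ)+1)/2^m) :
    Set.Ico ((k:ℝ)/2^n) (((k:ℝ)+1)/2^n) ⊆ Set.Ico ((k':ℝ)/2^m) (((k':ℝ)+1)/2^m) := by
  have hp : (0:ℝ) < 2 ^ n := by positivity
  have hq : (0:ℝ) < 2 ^ m := by positivity
  obtain ⟨d, rfl⟩ := Nat.exists_eq_add_of_le hmn
  have hpow : (2:ℝ) ^ (m + d) = 2 ^ m * 2 ^ d := by rw [pow_add]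
  -- k < (k'+1) * 2^d  (from k/2^n < (k'+1)/2^m)
  have hA : (k:ℝ) < ((k':ℝ)+1) * 2 ^ d := by
    have : (k:ℝ)/2^(m+d) < ((k':ℝ)+1)/2^m := lt_of_le_of_lt h1 h4
    rw [div_lt_div_iff₀ hp hq] at this
    have h2d : (0:ℝ) < 2^d := by positivity
    nlinarith [this]
  -- k' * 2^d < k + 1  (from k'/2^m < (k+1)/2^n)
  have hB : (k':ℝ) * 2 ^ d < (k:ℝ) + 1 := by
    have : (k':ℝ)/2^m < ((k:ℝ)+1)/2^(m+d) := lt_of_le_of_lt h3 h2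
    rw [div_lt_div_iff₀ hq hp] at this
    have h2d : (0:ℝ) < 2^d := by positivity
    nlinarith [this]
  -- integer conclusions
  have hA' : (k:ℕ) + 1 ≤ (k' + 1) * 2 ^ d := by
    have hr : ((k:ℕ):ℝ) < (((k'+1) * 2^d : ℕ):ℝ) := by push_cast; linarith
    have : (k:ℕ) < (k'+1) * 2^d := by exact_mod_cast hr
    omega
  have hB' : k' * 2 ^ d ≤ k := by
    have hr : ((k' * 2^d : ℕ):ℝ) < ((k + 1 : ℕ):ℝ) := by push_cast; linarith
    have : k' * 2^d < k + 1 := by exact_mod_cast hr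
    omega
  apply Set.Ico_subset_Ico
  · rw [div_le_div_iff₀ hq hp]
    calc (k':ℝ) * 2^(m+d) = (k' * 2^d : ℕ) * 2^m := by push_cast; ring
    _ ≤ (k:ℝ) * 2^m := by
        have : ((k' * 2^d : ℕ):ℝ) ≤ (k:ℝ) := by exact_mod_cast hB'
        nlinarith [hq, this]
  · rw [div_le_div_iff₀ hp hq]
    calc ((k:ℝ)+1) * 2^m = ((k+1 : ℕ):ℝ) * 2^m := by push_cast; ring
    _ ≤ (((k'+1) * 2^d : ℕ):ℝ) * 2^m := by
        have : ((k+1:ℕ):ℝ) ≤ (((k'+1)*2^d : ℕ):ℝ) := by exact_mod_cast hA'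
        nlinarith [hq, this]
    _ = ((k':ℝ)+1) * 2^(m+d) := by push_cast; ring

lemma dy_comparable {I J : DyadicI} (h : (dySet I ∩ dySet J).Nonempty) :
    dySet I ⊆ dySet J ∨ dySet J ⊆ dySet I := by
  obtain ⟨t, ht1, ht2⟩ := h
  obtain ⟨n, k⟩ := I; obtain ⟨m, k'⟩ := J
  simp only [dySet, Set.mem_Ico] at ht1 ht2
  rcases le_total m n with hmn | hnm
  · exact Or.inl (subset_of_mem hmn k k' ht1.1 ht1.2 ht2.1 ht2.2)
  · exact Or.inr (subset_of_mem hnm k' k ht2.1 ht2.2 ht1.1 ht1.2)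

lemma level_le_of_subset {I J : DyadicI} (h : dySet I ⊆ dySet J) : J.1 ≤ I.1 := by
  obtain ⟨n, k⟩ := I; obtain ⟨m, k'⟩ := J
  rw [dySet, dySet, Set.Ico_subset_Ico_iff (dy_lt ⟨n,k⟩)] at h
  simp only at h ⊢
  by_contra hc
  push_neg at hc
  have hp : (0:ℝ) < 2 ^ n := by positivity
  have hq : (0:ℝ) < 2 ^ m := by positivity
  have h1 := h.1; have h2 := h.2
  rw [div_le_div_iff₀ hq hp] at h1
  rw [div_le_div_iff₀ hp hq] at h2
  -- 2^m ≥ 2 * 2^n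
  have hm : (2:ℝ) * 2^n ≤ 2^m := by
    have : (2:ℝ)^(n+1) ≤ 2^m := by
      apply pow_le_pow_right₀ (by norm_num) hc
    calc (2:ℝ) * 2^n = 2^(n+1) := by ring
    _ ≤ 2^m := this
  nlinarith [h1, h2, hp, hq]




lemma eq_of_subset_level {I J : DyadicI} (h : dySet I ⊆ dySet J) (hl : I.1 = J.1) : I = J := by
  obtain ⟨n, k⟩ := I; obtain ⟨m, k'⟩ := J
  simp only at hl; subst hl
  rw [dySet, dySet, Set.Ico_subset_Ico_iff (dy_lt ⟨n,k⟩)] at h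
  have hp : (0:ℝ) < 2 ^ n := by positivity
  have h1 : (k':ℝ) ≤ k := by
    have := h.1; rw [div_le_div_iff₀ hp hp] at this; nlinarith
  have h2 : (k:ℝ) ≤ k' := by
    have := h.2; rw [div_le_div_iff₀ hp hp] at this; nlinarith
  have : (k:ℕ) = (k':ℕ) := by exact_mod_cast le_antisymm h2 h1
  simp [Fin.ext_iff, this]

lemma comparable_of_common {I J K : DyadicI} (hIJ : dySet K ⊆ dySet I) (hIK : dySet K ⊆ dySet J) :
    dySet I ⊆ dySet J ∨ dySet J ⊆ dySet I := by
  apply dy_comparable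
  obtain ⟨t, ht⟩ := dySet_nonempty K
  exact ⟨t, hIJ ht, hIK ht⟩

lemma anc_finite (I : DyadicI) : {J | dySet I ⊆ dySet J}.Finite := by
  apply Set.Finite.of_finite_image (f := Sigma.fst)
  · apply Set.Finite.subset (Set.finite_Iic I.1)
    rintro n ⟨J, hJ, rfl⟩
    exact level_le_of_subset hJ
  · rintro J hJ K hK hJK
    rcases comparable_of_common hJ hK with h | h
    · exact eq_of_subset_level h hJK
    · exact (eq_of_subset_level h hJK.symm).symm

/-- strict ancestors within `L` -/
def sAb (L : Set DyadicI) (J : DyadicI) : Set DyadicI := {K ∈ L | dySet J ⊂ dySet K}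

lemma sAb_finite (L : Set DyadicI) (J : DyadicI) : (sAb L J).Finite :=
  (anc_finite J).subset (fun K hK => hK.2.1)

/-- rank = number of strict ancestors in L -/
noncomputable def rk (L : Set DyadicI) (J : DyadicI) : ℕ := (sAb L J).ncard

lemma rk_lt_of_ssub {L : Set DyadicI} {J K : DyadicI} (hK : K ∈ L)
    (h : dySet J ⊂ dySet K) : rk L K < rk L J := by
  have hsub : insert K (sAb L K) ⊆ sAb L J := by
    rintro K' (rfl | ⟨hK', hss⟩)
    · exact ⟨hK, h⟩
    · exact ⟨hK', h.trans hss⟩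
  have hKn : K ∉ sAb L K := fun h' => (ssubset_irrefl _ h'.2)
  calc rk L K < (insert K (sAb L K)).ncard := by
        rw [Set.ncard_insert_of_notMem hKn ((sAb_finite L K))]
        exact Nat.lt_succ_self _
  _ ≤ rk L J := Set.ncard_le_ncard hsub (sAb_finite L J)

lemma maximalIn_eq (L : Set DyadicI) : maximalIn L = {J ∈ L | rk L J = 0} := by
  ext J
  constructor
  · rintro ⟨hJ, hmax⟩
    refine ⟨hJ, ?_⟩
    rw [rk, Set.ncard_eq_zero (sAb_finite L J)]
    ext K; simp only [Set.mem_empty_iff_false, iff_false]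
    rintro ⟨hKL, hss⟩
    exact hss.ne (congrArg dySet (hmax K hKL hss.subset))
  · rintro ⟨hJ, hrk⟩
    refine ⟨hJ, fun K hK hsub => ?_⟩
    by_contra hne
    have : K ∈ sAb L J := ⟨hK, hsub.ssubset_of_ne (fun h => hne (dySet_inj h))⟩
    rw [rk, Set.ncard_eq_zero (sAb_finite L J)] at hrk
    simp [hrk] at this

/-- the top strict ancestor -/
lemma exists_top {L : Set DyadicI} {J : DyadicI} (h : (sAb L J).Nonempty) :
    ∃ M ∈ sAb L J, sAb L J ∩ maximalIn L = {M} := by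
  obtain ⟨M, hM, hmax'⟩ := Set.Finite.exists_maximalFor dySet _ (sAb_finite L J) h
  have hmax : ∀ K ∈ sAb L J, dySet M ⊆ dySet K → dySet M = dySet K :=
    fun K hK hs => le_antisymm hs (hmax' hK hs)
  refine ⟨M, hM, ?_⟩
  have hMmax : M ∈ maximalIn L := by
    refine ⟨hM.1, fun K hK hsub => ?_⟩
    by_cases hKM : K = M
    · exact hKM.symm
    · have hKJ : K ∈ sAb L J := ⟨hK, hM.2.trans_subset hsub⟩
      exact dySet_inj (hmax K hKJ hsub)
  ext K
  simp only [Set.mem_inter_iff, Set.mem_singleton_iff]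
  constructor
  · rintro ⟨hKJ, hKmax⟩
    rcases comparable_of_common hKJ.2.subset hM.2.subset with hc | hc
    · exact hKmax.2 M hM.1 hc
    · exact (dySet_inj (hmax K hKJ hc)).symm ▸ rfl
  · rintro rfl; exact ⟨hM, hMmax⟩

lemma rk_diff_max {L : Set DyadicI} {J : DyadicI} (hJ : J ∈ L) (h : (sAb L J).Nonempty) :
    rk (L \ maximalIn L) J + 1 = rk L J := by
  obtain ⟨M, hM, hMeq⟩ := exists_top h
  have hset : sAb (L \ maximalIn L) J = sAb L J \ {M} := by
    ext K
    simp only [sAb, Set.mem_setOf_eq, Set.mem_diff, Set.mem_singleton_iff]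
    constructor
    · rintro ⟨⟨hKL, hKm⟩, hss⟩
      refine ⟨⟨hKL, hss⟩, fun hKM => hKm ?_⟩
      subst hKM
      have : K ∈ sAb L J ∩ maximalIn L → K ∈ ({K} : Set DyadicI) := by rw [hMeq]; exact fun h => h
      exact (hMeq ▸ (Set.mem_singleton K)) |> fun h => h.2
    · rintro ⟨⟨hKL, hss⟩, hKM⟩
      refine ⟨⟨hKL, fun hKmax => hKM ?_⟩, hss⟩
      have : K ∈ sAb L J ∩ maximalIn L := ⟨⟨hKL, hss⟩, hKmax⟩
      rw [hMeq] at this; exact this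
  simp only [rk]
  rw [hset, Set.ncard_diff_singleton_of_mem hM]
  have : 0 < (sAb L J).ncard := (Set.ncard_pos (sAb_finite L J)).2 h
  omega

lemma gen_eq_rk (n : ℕ) (L : Set DyadicI) : gen n L = {J ∈ L | rk L J = n} := by
  induction n generalizing L with
  | zero => exact maximalIn_eq L
  | succ n ih =>
    show gen n (L \ maximalIn L) = _
    rw [ih]
    ext J
    simp only [Set.mem_setOf_eq, Set.mem_diff]
    constructor
    · rintro ⟨⟨hJL, hJm⟩, hrk⟩
      refine ⟨hJL, ?_⟩
      have hne : (sAb L J).Nonempty := by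
        by_contra hemp
        rw [Set.not_nonempty_iff_eq_empty] at hemp
        exact hJm (by rw [maximalIn_eq]; exact ⟨hJL, by simp only [rk, hemp]; simp⟩)
      have := rk_diff_max hJL hne
      omega
    · rintro ⟨hJL, hrk⟩
      have hne : (sAb L J).Nonempty := by
        refine (Set.ncard_pos (sAb_finite L J)).1 ?_
        simp only [rk] at hrk
        omega
      have hd := rk_diff_max hJL hne
      have hJm : J ∉ maximalIn L := by
        rw [maximalIn_eq]
        rintro ⟨-, h0⟩
        omega
      exact ⟨⟨hJL, hJm⟩, by omega⟩

section more
lemma exists_parent {L : Set DyadicI} {J : DyadicI} (hJ : J ∈ L) {r : ℕ}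
    (h : rk L J = r + 1) : ∃ K ∈ L, dySet J ⊂ dySet K ∧ rk L K = r := by
  simp only [rk] at h
  have hne : (sAb L J).Nonempty := (Set.ncard_pos (sAb_finite L J)).1 (by omega)
  obtain ⟨K, hK, hmin'⟩ := Set.Finite.exists_minimalFor dySet _ (sAb_finite L J) hne
  have hmin : ∀ K' ∈ sAb L J, dySet K' ⊆ dySet K → dySet K = dySet K' :=
    fun K' hK' hs => le_antisymm (hmin' hK' hs) hs
  refine ⟨K, hK.1, hK.2, ?_⟩
  have hset : sAb L K = sAb L J \ {K} := by
    ext K'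
    simp only [sAb, Set.mem_setOf_eq, Set.mem_diff, Set.mem_singleton_iff]
    constructor
    · rintro ⟨hK'L, hss⟩
      exact ⟨⟨hK'L, hK.2.trans hss⟩, fun hKK' => (ssubset_irrefl _ (hKK' ▸ hss))⟩
    · rintro ⟨⟨hK'L, hss⟩, hne'⟩
      refine ⟨hK'L, ?_⟩
      rcases comparable_of_common hK.2.subset hss.subset with hc | hc
      · exact hc.ssubset_of_ne (fun he => hne' (dySet_inj he).symm)
      · exact absurd (dySet_inj (hmin K' ⟨hK'L, hss⟩ hc)).symm hne'
  simp only [rk]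
  rw [hset, Set.ncard_diff_singleton_of_mem hK, h]
  omega

lemma exists_ancestor {L : Set DyadicI} {J : DyadicI} (hJ : J ∈ L) {k d : ℕ}
    (h : rk L J = k + d) : ∃ K ∈ L, dySet J ⊆ dySet K ∧ rk L K = k := by
  induction d generalizing J with
  | zero => exact ⟨J, hJ, subset_rfl, h⟩
  | succ d ih =>
    obtain ⟨K, hKL, hss, hrk⟩ := exists_parent hJ (r := k + d) (by omega)
    obtain ⟨K', hK'L, hss', hrk'⟩ := ih hKL hrk
    exact ⟨K', hK'L, hss.subset.trans hss', hrk'⟩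

/-- same-rank intervals are pairwise disjoint -/
lemma disjoint_of_rk_eq {L : Set DyadicI} {J K : DyadicI} (hJ : J ∈ L) (hK : K ∈ L)
    (hne : J ≠ K) (h : rk L J = rk L K) : Disjoint (dySet J) (dySet K) := by
  by_contra hd
  rw [Set.not_disjoint_iff_nonempty_inter] at hd
  rcases dy_comparable hd with hc | hc
  · have := rk_lt_of_ssub hK (hc.ssubset_of_ne (fun he => hne (dySet_inj he)))
    omega
  · have := rk_lt_of_ssub hJ (hc.ssubset_of_ne (fun he => hne.symm (dySet_inj he)))
    omega

/-- localization: intermediate intervals between K and J are numerous -/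
lemma count_between {L : Set DyadicI} {J K : DyadicI} (hJ : J ∈ L) (hK : K ∈ L)
    (hKJ : dySet K ⊆ dySet J) {k m : ℕ} (hrkJ : rk L J = k) (hrkK : rk L K = k + m) :
    m ≤ ({K' ∈ L | dySet K ⊂ dySet K' ∧ dySet K' ⊆ dySet J}).ncard := by
  set A := {K' ∈ L | dySet K ⊂ dySet K' ∧ dySet K' ⊆ dySet J} with hA
  have hAfin : A.Finite := (anc_finite K).subset (fun K' hK' => hK'.2.1.subset)
  have hsub : sAb L K ⊆ A ∪ sAb L J := by
    rintro K' ⟨hK'L, hss⟩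
    rcases comparable_of_common hss.subset hKJ with hc | hc
    · exact Or.inl ⟨hK'L, hss, hc⟩
    · by_cases he : J = K'
      · exact Or.inl ⟨hK'L, hss, le_of_eq (congrArg dySet he.symm)⟩
      · exact Or.inr ⟨hK'L, hc.ssubset_of_ne (fun h' => he (dySet_inj h'))⟩
  have := Set.ncard_le_ncard hsub (hAfin.union (sAb_finite L J))
  have h2 := Set.ncard_union_le A (sAb L J)
  simp only [rk] at hrkJ hrkK
  omega
end more


lemma dySet_meas (I : DyadicI) : MeasurableSet (dySet I) := measurableSet_Ico

lemma dyLen_pos (I : DyadicI) : 0 < dyLen I := by rw [dyLen]; positivity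

lemma count_le {ι : Type*} [Countable ι] (s : ι → Set ℝ) (hs : ∀ i, MeasurableSet (s i))
    (S : Set ℝ) (hS : MeasurableSet S) (c : ℝ≥0∞)
    (h : ∀ t ∈ S, c ≤ ∑' i, (s i).indicator (1 : ℝ → ℝ≥0∞) t) :
    c * volume S ≤ ∑' i, volume (s i) := by
  have h1 : c * volume S = ∫⁻ t, S.indicator (fun _ => c) t := by
    rw [lintegral_indicator_const hS]
  rw [h1]
  calc ∫⁻ t, S.indicator (fun _ => c) t ≤ ∫⁻ t, ∑' i, (s i).indicator 1 t := by
        apply lintegral_mono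
        intro t
        by_cases ht : t ∈ S
        · rw [Set.indicator_of_mem ht]; exact h t ht
        · rw [Set.indicator_of_notMem ht]; exact zero_le
  _ = ∑' i, ∫⁻ t, (s i).indicator 1 t :=
        lintegral_tsum (fun i => (measurable_one.indicator (hs i)).aemeasurable)
  _ = ∑' i, volume (s i) := tsum_congr (fun i => lintegral_indicator_one (hs i))

lemma tsum_indicator_ge {ι : Type*} (s : ι → Set ℝ) (t : ℝ) (V : Set ι) (hV : V.Finite)
    (hmem : ∀ i ∈ V, t ∈ s i) :
    (V.ncard : ℝ≥0∞) ≤ ∑' i, (s i).indicator (1 : ℝ → ℝ≥0∞) t := by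
  have h1 : ∑ i ∈ hV.toFinset, (s i).indicator (1 : ℝ → ℝ≥0∞) t ≤ ∑' i, (s i).indicator 1 t :=
    ENNReal.sum_le_tsum _
  refine le_trans (le_of_eq ?_) h1
  calc (V.ncard : ℝ≥0∞) = ∑ _i ∈ hV.toFinset, 1 := by
        rw [Finset.sum_const, Set.ncard_eq_toFinset_card _ hV, nsmul_eq_mul, mul_one]
  _ = ∑ i ∈ hV.toFinset, (s i).indicator 1 t :=
        Finset.sum_congr rfl (fun i hi => by
          rw [Set.indicator_of_mem (hmem i (hV.mem_toFinset.1 hi))]; rfl)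


end GenerationDecayAux

open ENNReal in
set_option maxHeartbeats 1000000 in
/-- Generation decay estimate: if `E` has Carleson constant at most `C`,
then for `I ∈ E` the `ℓ`-th generation of `{J ∈ E : J ⊆ I}` covers a set of measure at most
`4·2^{-2ℓ/(4C+1)}|I|`. -/
theorem generation_decay (E : Set DyadicI) (hE : E.Nonempty) (C : ℝ)
    (hsum : ∀ I ∈ E, Summable fun J : {J : DyadicI // J ∈ E ∧ dySet J ⊆ dySet I} => dyLen J.1)
    (hC : ∀ I ∈ E,
      (∑' J : {J : DyadicI // J ∈ E ∧ dySet J ⊆ dySet I}, dyLen J.1) ≤ C * dyLen I)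
    (I : DyadicI) (hI : I ∈ E) (ℓ : ℕ) :
    (volume (⋃ J ∈ gen ℓ {J : DyadicI | J ∈ E ∧ dySet J ⊆ dySet I}, dySet J)).toReal ≤
      4 * (2 : ℝ) ^ (-(2 * (ℓ : ℝ)) / (4 * C + 1)) * dyLen I := by
  have hC1 : 1 ≤ C := by
    have h0 := hC I hI
    have hle : dyLen I ≤ ∑' J : {J : DyadicI // J ∈ E ∧ dySet J ⊆ dySet I}, dyLen J.1 :=
      Summable.le_tsum (hsum I hI) ⟨I, hI, subset_rfl⟩ (fun j _ => (dyLen_pos _).le)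
    nlinarith [dyLen_pos I]
  set D : Set DyadicI := {J : DyadicI | J ∈ E ∧ dySet J ⊆ dySet I} with hD
  set m : ℕ := ⌈2 * C - 1⌉₊ with hm
  have hm1 : 1 ≤ m := Nat.one_le_ceil_iff.2 (by linarith)
  have hm2C : 2 * C ≤ (m : ℝ) + 1 := by
    have := Nat.le_ceil (2 * C - 1); rw [← hm] at this; linarith
  have hmlt : (m : ℝ) < 2 * C := by
    have := Nat.ceil_lt_add_one (by linarith : (0:ℝ) ≤ 2 * C - 1)
    rw [← hm] at this; linarith
  set U : ℕ → Set ℝ := fun n => ⋃ J ∈ gen n D, dySet J with hU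
  have hgensub : ∀ n, gen n D ⊆ D := fun n => by
    rw [gen_eq_rk]; exact fun J hJ => hJ.1
  have hUmeas : ∀ n, MeasurableSet (U n) := fun n =>
    MeasurableSet.biUnion (Set.to_countable _) (fun J _ => dySet_meas J)
  have hUI : ∀ n, U n ⊆ dySet I := by
    intro n t ht
    obtain ⟨J, hJ, htJ⟩ := Set.mem_iUnion₂.1 ht
    exact (hgensub n hJ).2 htJ
  have hUmono : ∀ k d, U (k + d) ⊆ U k := by
    intro k d t ht
    obtain ⟨J, hJ, htJ⟩ := Set.mem_iUnion₂.1 ht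
    rw [gen_eq_rk] at hJ
    obtain ⟨K, hKD, hsub, hrkK⟩ := exists_ancestor hJ.1 hJ.2
    exact Set.mem_iUnion₂.2 ⟨K, by rw [gen_eq_rk]; exact ⟨hKD, hrkK⟩, hsub htJ⟩
  have hstep : ∀ k, volume (U (k + m)) ≤ ENNReal.ofReal (1/2) * volume (U k) := by
    intro k
    have key : ∀ J : DyadicI, J ∈ gen k D →
        ((m:ℝ≥0∞) + 1) * volume (U (k + m) ∩ dySet J) ≤
          ENNReal.ofReal C * volume (dySet J) := by
      intro J hJgen
      have hJD : J ∈ D := hgensub k hJgen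
      have hJE : J ∈ E := hJD.1
      have hrkJ : rk D J = k := by rw [gen_eq_rk] at hJgen; exact hJgen.2
      have hcount := count_le (ι := {K : DyadicI // K ∈ E ∧ dySet K ⊆ dySet J})
          (fun i => dySet i.1) (fun i => dySet_meas _) (U (k + m) ∩ dySet J)
          ((hUmeas _).inter (dySet_meas _)) ((m:ℝ≥0∞) + 1) ?_
      · refine hcount.trans ?_
        rw [volume_dySet, ← ENNReal.ofReal_mul (by linarith : (0:ℝ) ≤ C)]
        calc (∑' i : {K : DyadicI // K ∈ E ∧ dySet K ⊆ dySet J}, volume (dySet i.1))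
            = ∑' i : {K : DyadicI // K ∈ E ∧ dySet K ⊆ dySet J}, ENNReal.ofReal (dyLen i.1) :=
              tsum_congr (fun i => volume_dySet _)
        _ = ENNReal.ofReal (∑' i : {K : DyadicI // K ∈ E ∧ dySet K ⊆ dySet J}, dyLen i.1) :=
              (ENNReal.ofReal_tsum_of_nonneg (fun i => (dyLen_pos _).le) (hsum J hJE)).symm
        _ ≤ ENNReal.ofReal (C * dyLen J) := ENNReal.ofReal_le_ofReal (hC J hJE)
      · intro t ht
        obtain ⟨ht1, ht2⟩ := ht
        obtain ⟨K, hKgen, htK⟩ := Set.mem_iUnion₂.1 ht1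
        have hKD : K ∈ D := hgensub _ hKgen
        have hrkK : rk D K = k + m := by rw [gen_eq_rk] at hKgen; exact hKgen.2
        have hKJ : dySet K ⊆ dySet J := by
          rcases dy_comparable ⟨t, htK, ht2⟩ with hc | hc
          · exact hc
          · by_cases he : J = K
            · exact le_of_eq (congrArg dySet he.symm)
            · have hss : dySet J ⊂ dySet K := hc.ssubset_of_ne (fun h' => he (dySet_inj h'))
              have hlt := rk_lt_of_ssub hKD hss
              omega
        set V : Set {K' : DyadicI // K' ∈ E ∧ dySet K' ⊆ dySet J} :=
          {i | dySet K ⊆ dySet i.1 ∧ dySet i.1 ⊆ dySet J} with hV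
        have hVfin : V.Finite := by
          refine ((anc_finite K).preimage Subtype.val_injective.injOn).subset ?_
          exact fun i hi => hi.1
        have hVcard : m + 1 ≤ V.ncard := by
          have hA := count_between (L := D) hJD hKD hKJ hrkJ hrkK
          set A := {K' ∈ D | dySet K ⊂ dySet K' ∧ dySet K' ⊆ dySet J} with hAdef
          have hAfin : A.Finite := (anc_finite K).subset (fun K' h => h.2.1.subset)
          have hKA : K ∉ A := fun h => ssubset_irrefl _ h.2.1
          have hsub2 : insert K A ⊆ Subtype.val '' V := by
            rintro K' hK'
            rcases hK' with rfl | hK'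
            · exact ⟨⟨K', hKD.1, hKJ⟩, ⟨subset_rfl, hKJ⟩, rfl⟩
            · exact ⟨⟨K', hK'.1.1, hK'.2.2⟩, ⟨hK'.2.1.subset, hK'.2.2⟩, rfl⟩
          have h1 : (insert K A).ncard ≤ (Subtype.val '' V).ncard :=
            Set.ncard_le_ncard hsub2 (hVfin.image _)
          rw [Set.ncard_insert_of_notMem hKA hAfin,
            Set.ncard_image_of_injective _ Subtype.val_injective] at h1
          omega
        have hts := tsum_indicator_ge (fun i => dySet i.1) t V hVfin (fun i hi => hi.1 htK)
        refine le_trans ?_ hts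
        calc ((m:ℝ≥0∞) + 1) = ((m + 1 : ℕ) : ℝ≥0∞) := by push_cast; ring
        _ ≤ (V.ncard : ℝ≥0∞) := by exact_mod_cast hVcard
    have hcover : U (k + m) ⊆ ⋃ J : gen k D, (U (k + m) ∩ dySet J.1) := by
      intro t ht
      obtain ⟨J, hJ, htJ⟩ := Set.mem_iUnion₂.1 (hUmono k m ht)
      exact Set.mem_iUnion.2 ⟨⟨J, hJ⟩, ht, htJ⟩
    have h2 : volume (U (k + m)) ≤ ∑' J : gen k D, volume (U (k + m) ∩ dySet J.1) :=
      (measure_mono hcover).trans (measure_iUnion_le _)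
    have hUk : volume (U k) = ∑' J : gen k D, volume (dySet J.1) := by
      rw [show U k = ⋃ J : gen k D, dySet J.1 from Set.biUnion_eq_iUnion _ _]
      refine measure_iUnion ?_ (fun J => dySet_meas _)
      intro i j hij
      have hrkgen : ∀ J ∈ gen k D, rk D J = k := fun J hJ => by
        rw [gen_eq_rk] at hJ; exact hJ.2
      exact disjoint_of_rk_eq (hgensub k i.2) (hgensub k j.2)
        (fun h => hij (Subtype.ext h)) ((hrkgen i.1 i.2).trans (hrkgen j.1 j.2).symm)
    have h3 : ((m:ℝ≥0∞) + 1) * volume (U (k + m)) ≤ ENNReal.ofReal C * volume (U k) := by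
      calc ((m:ℝ≥0∞) + 1) * volume (U (k + m))
          ≤ ((m:ℝ≥0∞) + 1) * ∑' J : gen k D, volume (U (k + m) ∩ dySet J.1) :=
            mul_le_mul_right h2 _
      _ = ∑' J : gen k D, ((m:ℝ≥0∞) + 1) * volume (U (k + m) ∩ dySet J.1) :=
            ENNReal.tsum_mul_left.symm
      _ ≤ ∑' J : gen k D, ENNReal.ofReal C * volume (dySet J.1) :=
            ENNReal.tsum_le_tsum (fun J => key J.1 J.2)
      _ = ENNReal.ofReal C * ∑' J : gen k D, volume (dySet J.1) := ENNReal.tsum_mul_left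
      _ = ENNReal.ofReal C * volume (U k) := by rw [hUk]
    have hne0 : ((m:ℝ≥0∞) + 1) ≠ 0 := by simp
    have hnet : ((m:ℝ≥0∞) + 1) ≠ ⊤ := by
      simp [ENNReal.add_eq_top, ENNReal.natCast_ne_top]
    have hd1 : volume (U (k + m)) ≤ ENNReal.ofReal C * volume (U k) / ((m:ℝ≥0∞) + 1) := by
      rw [ENNReal.le_div_iff_mul_le (Or.inl hne0) (Or.inl hnet), mul_comm]
      exact h3
    refine hd1.trans ?_
    rw [div_eq_mul_inv, mul_right_comm]
    apply mul_le_mul_left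
    have hmo : ((m:ℝ≥0∞) + 1) = ENNReal.ofReal ((m:ℝ) + 1) := by
      rw [ENNReal.ofReal_add (Nat.cast_nonneg m) zero_le_one, ENNReal.ofReal_natCast,
        ENNReal.ofReal_one]
    rw [hmo, ← div_eq_mul_inv, ← ENNReal.ofReal_div_of_pos (by positivity)]
    apply ENNReal.ofReal_le_ofReal
    rw [div_le_iff₀ (by positivity)]
    linarith
  have hiter : ∀ j, volume (U (j * m)) ≤ ENNReal.ofReal ((1/2)^j * dyLen I) := by
    intro j
    induction j with
    | zero =>
      have h0 := (measure_mono (hUI 0)).trans (le_of_eq (volume_dySet I))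
      simpa using h0
    | succ j ih =>
      have hrw : (j + 1) * m = j * m + m := by ring
      rw [hrw]
      calc volume (U (j * m + m)) ≤ ENNReal.ofReal (1/2) * volume (U (j * m)) := hstep _
      _ ≤ ENNReal.ofReal (1/2) * ENNReal.ofReal ((1/2)^j * dyLen I) := mul_le_mul_right ih _
      _ = ENNReal.ofReal ((1/2)^(j+1) * dyLen I) := by
          rw [← ENNReal.ofReal_mul (by norm_num)]; congr 1; ring
  set j := ℓ / m with hj
  have hjm : j * m ≤ ℓ := by rw [hj]; exact Nat.div_mul_le_self ℓ m
  have hvol : volume (U ℓ) ≤ ENNReal.ofReal ((1/2)^j * dyLen I) := by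
    have hsplit : ℓ = j * m + (ℓ - j * m) := (Nat.add_sub_cancel' hjm).symm
    refine le_trans ?_ (hiter j)
    exact measure_mono (hsplit ▸ hUmono (j * m) (ℓ - j * m))
  refine le_trans (ENNReal.toReal_le_of_le_ofReal
    (mul_nonneg (by positivity) (dyLen_pos I).le) hvol) ?_
  apply mul_le_mul_of_nonneg_right ?_ (dyLen_pos I).le
  -- (1/2)^j ≤ 4 * 2 ^ (-(2ℓ)/(4C+1))
  have hmpos : (0:ℝ) < m := by exact_mod_cast hm1
  have hml : (ℓ:ℝ) < ((j:ℝ) + 1) * m := by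
    have h1 : ℓ < (j + 1) * m := by
      have h2 := Nat.div_add_mod ℓ m
      have h3 := Nat.mod_lt ℓ (show 0 < m by omega)
      have h4 : (j + 1) * m = m * (ℓ / m) + m := by rw [hj]; ring
      rw [h4]
      have h5 : m * (ℓ / m) + ℓ % m = ℓ := h2
      linarith
    calc (ℓ:ℝ) < (((j+1) * m : ℕ) : ℝ) := by exact_mod_cast h1
    _ = ((j:ℝ) + 1) * m := by push_cast; ring
  have hfrac : 2 * (ℓ:ℝ) / (4 * C + 1) ≤ (ℓ:ℝ) / m := by
    rw [div_le_div_iff₀ (by linarith) hmpos]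
    have hℓ0 : (0:ℝ) ≤ ℓ := Nat.cast_nonneg ℓ
    nlinarith
  have hfrac2 : (ℓ:ℝ) / m < (j:ℝ) + 1 := by
    rw [div_lt_iff₀ hmpos]; linarith
  have hexp : -(j:ℝ) ≤ 2 + -(2 * (ℓ:ℝ)) / (4 * C + 1) := by
    rw [neg_div]
    have : 2 * (ℓ:ℝ) / (4 * C + 1) ≤ (j:ℝ) + 2 := by linarith
    linarith
  calc (1/2:ℝ)^j = (2:ℝ) ^ (-(j:ℝ)) := by
        rw [Real.rpow_neg (by norm_num), Real.rpow_natCast, ← inv_pow, one_div]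
  _ ≤ (2:ℝ) ^ (2 + -(2 * (ℓ:ℝ)) / (4 * C + 1)) :=
        (Real.rpow_le_rpow_left_iff one_lt_two).2 hexp
  _ = 4 * (2:ℝ) ^ (-(2 * (ℓ:ℝ)) / (4 * C + 1)) := by
        have h4 : (2:ℝ) ^ (2:ℝ) = 4 := by
          calc (2:ℝ)^(2:ℝ) = (2:ℝ)^((2:ℕ):ℝ) := by norm_num
          _ = (2:ℝ)^(2:ℕ) := Real.rpow_natCast 2 2
          _ = 4 := by norm_num
        rw [Real.rpow_add two_pos, h4]
end
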